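/- Let C ⊂ ℝ^d be convex compact with Euclidean diameter ρ̄, and W doubly stochastic with |λ₂(W)| < 1. Fix α ∈ (0,1] and let t₀ be the smallest integer with |λ₂(W)| ≤ (t₀/(t₀+1))^α / (1 + t₀^{−α}). Suppose iterates are generated by θₜ₊₁ⁱ = (1−t^{−α})θ̄ₜⁱ + t^{−α}aₜⁱ with aₜⁱ ∈ C, and θ̄ₜ₊₁ⁱ = ∑ⱼ W_{ij}θₜ₊₁ʲ, with all θ̄₁ⁱ ∈ C. Then for all t ≥ 1, √(∑ᵢ ‖θ̄ₜⁱ − θ̄ₜ‖₂²) ≤ t₀^α √N ρ̄ / t^α, where θ̄ₜ = (1/N)∑ᵢ θₜⁱ. -/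

import Mathlib

open scoped BigOperators

section Aux

variable {n : ℕ} {E : Type*} [SeminormedAddCommGroup E]

lemma aux_sqrt_sum_norm_eq (f : Fin n → E) :
    Real.sqrt (∑ i, ‖f i‖ ^ 2) = ‖(WithLp.equiv 2 (Fin n → E)).symm f‖ :=
  (PiLp.norm_eq_of_L2 _).symm

lemma aux_sqrt_sum_add_le (f g : Fin n → E) :
    Real.sqrt (∑ i, ‖f i + g i‖ ^ 2)
      ≤ Real.sqrt (∑ i, ‖f i‖ ^ 2) + Real.sqrt (∑ i, ‖g i‖ ^ 2) := by
  have h := norm_add_le ((WithLp.equiv 2 (Fin n → E)).symm f) ((WithLp.equiv 2 (Fin n → E)).symm g)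
  simp only [PiLp.norm_eq_of_L2, PiLp.add_apply, WithLp.equiv_symm_apply, PiLp.toLp_apply] at h
  exact h

lemma aux_sqrt_sum_smul (c : ℝ) {F : Type*} [NormedAddCommGroup F] [NormedSpace ℝ F]
    (f : Fin n → F) :
    Real.sqrt (∑ i, ‖c • f i‖ ^ 2) = |c| * Real.sqrt (∑ i, ‖f i‖ ^ 2) := by
  simp_rw [norm_smul, Real.norm_eq_abs, mul_pow, ← Finset.mul_sum]
  rw [Real.sqrt_mul (by positivity), Real.sqrt_sq (abs_nonneg c)]

lemma aux_sqrt_sum_le_of_le {f : Fin n → E} {r : ℝ} (hr : 0 ≤ r) (h : ∀ i, ‖f i‖ ≤ r) :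
    Real.sqrt (∑ i, ‖f i‖ ^ 2) ≤ Real.sqrt n * r := by
  have h1 : ∑ i, ‖f i‖ ^ 2 ≤ (n : ℝ) * r ^ 2 := by
    calc ∑ i, ‖f i‖ ^ 2 ≤ ∑ _i : Fin n, r ^ 2 :=
          Finset.sum_le_sum fun i _ => pow_le_pow_left₀ (norm_nonneg _) (h i) 2
      _ = (n : ℝ) * r ^ 2 := by simp [Finset.sum_const, nsmul_eq_mul]
  calc Real.sqrt (∑ i, ‖f i‖ ^ 2) ≤ Real.sqrt ((n : ℝ) * r ^ 2) := Real.sqrt_le_sqrt h1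
    _ = Real.sqrt n * r := by rw [Real.sqrt_mul (by positivity), Real.sqrt_sq hr]

lemma aux_arith (lam R p q r q1 : ℝ) (hR : 0 ≤ R) (hlam0 : 0 ≤ lam)
    (hp : 1 ≤ p) (hq : 1 ≤ q) (hr : 0 < r) (hq1 : 0 < q1)
    (hmono : q / q1 ≤ p / r)
    (hlam : lam ≤ (q / q1) / (1 + q⁻¹)) :
    lam * ((1 - p⁻¹) * (q * R / p) + p⁻¹ * R) ≤ q * R / r := by
  have hp0 : (0:ℝ) < p := by linarith
  have hq0 : (0:ℝ) < q := by linarith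
  have hpi : p⁻¹ ≤ 1 := inv_le_one_of_one_le₀ hp
  have hpi0 : (0:ℝ) ≤ p⁻¹ := by positivity
  have hqi0 : (0:ℝ) < q⁻¹ := by positivity
  have hden : (0:ℝ) < 1 - p⁻¹ + q⁻¹ := by linarith
  have h1 : lam ≤ (p / r) / (1 - p⁻¹ + q⁻¹) :=
    le_trans hlam (div_le_div₀ (by positivity) hmono hden (by linarith))
  have h2 : lam * (1 - p⁻¹ + q⁻¹) ≤ p / r := (le_div_iff₀ hden).mp h1
  calc lam * ((1 - p⁻¹) * (q * R / p) + p⁻¹ * R)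
      = (lam * (1 - p⁻¹ + q⁻¹)) * (q * R / p) := by field_simp
    _ ≤ (p / r) * (q * R / p) := mul_le_mul_of_nonneg_right h2 (by positivity)
    _ = q * R / r := by field_simp

end Aux

set_option maxHeartbeats 1000000 in
/-- Lemma 3: consensus error of the iterate-averaging step of DeFW decays as
`t₀^α √N ρ̄ / t^α`, where `t₀` is the smallest integer satisfying the spectral condition
and `lam` is the second largest eigenvalue magnitude of `W` (characterized by its
contraction on mean-zero configurations). -/
theorem stmt_8 (N d : ℕ) (hN : 0 < N)
    (C : Set (EuclideanSpace ℝ (Fin d))) (hC : Convex ℝ C) (hCcpt : IsCompact C)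
    (ρ : ℝ) (hρ : Metric.diam C = ρ)
    (W : Matrix (Fin N) (Fin N) ℝ) (hWnonneg : ∀ i j, 0 ≤ W i j)
    (hrow : ∀ i, ∑ j, W i j = 1) (hcol : ∀ j, ∑ i, W i j = 1)
    (lam : ℝ) (hlam0 : 0 ≤ lam) (hlam1 : lam < 1)
    (hlam : ∀ v : Fin N → EuclideanSpace ℝ (Fin d), (∑ i, v i) = 0 →
      Real.sqrt (∑ i, ‖∑ j, W i j • v j‖ ^ 2) ≤ lam * Real.sqrt (∑ i, ‖v i‖ ^ 2))
    (α : ℝ) (hα0 : 0 < α) (hα1 : α ≤ 1)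
    (t₀ : ℕ)
    (ht₀ : IsLeast {n : ℕ | 1 ≤ n ∧
      lam ≤ ((n : ℝ) / ((n : ℝ) + 1)) ^ α / (1 + (n : ℝ) ^ (-α))} t₀)
    (θ θbar : ℕ → Fin N → EuclideanSpace ℝ (Fin d))
    (a : ℕ → Fin N → EuclideanSpace ℝ (Fin d)) (haC : ∀ t i, a t i ∈ C)
    (hθ1 : ∀ i, θ 1 i ∈ C) (hθbar1 : ∀ i, θbar 1 i ∈ C)
    (hupd : ∀ t : ℕ, 1 ≤ t → ∀ i,
      θ (t + 1) i = (1 - (t : ℝ) ^ (-α)) • θbar t i + (t : ℝ) ^ (-α) • a t i)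
    (hcons : ∀ t : ℕ, 1 ≤ t → ∀ i, θbar (t + 1) i = ∑ j, W i j • θ (t + 1) j) :
    ∀ t : ℕ, 1 ≤ t →
      Real.sqrt (∑ i, ‖θbar t i - (N : ℝ)⁻¹ • ∑ j, θ t j‖ ^ 2)
        ≤ (t₀ : ℝ) ^ α * Real.sqrt N * ρ / (t : ℝ) ^ α := by
  have hρ0 : 0 ≤ ρ := hρ ▸ Metric.diam_nonneg
  have hNR : (0:ℝ) < N := by exact_mod_cast hN
  have ht₀1 : 1 ≤ t₀ := ht₀.1.1
  have hlamle : lam ≤ ((t₀ : ℝ) / ((t₀ : ℝ) + 1)) ^ α / (1 + (t₀ : ℝ) ^ (-α)) := ht₀.1.2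
  have ht₀R : (1:ℝ) ≤ (t₀ : ℝ) := by exact_mod_cast ht₀1
  set R : ℝ := Real.sqrt N * ρ with hRdef
  have hR0 : 0 ≤ R := by positivity
  set q : ℝ := (t₀ : ℝ) ^ α with hqdef
  have hq1 : 1 ≤ q := Real.one_le_rpow ht₀R (le_of_lt hα0)
  -- step size facts
  have hγ : ∀ t : ℕ, 1 ≤ t → 0 ≤ (t : ℝ) ^ (-α) ∧ (t : ℝ) ^ (-α) ≤ 1 := by
    intro t ht
    have h1t : (1:ℝ) ≤ (t : ℝ) := by exact_mod_cast ht
    exact ⟨Real.rpow_nonneg (by linarith) _,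
      Real.rpow_le_one_of_one_le_of_nonpos h1t (by linarith)⟩
  -- membership of iterates in C
  have hmemC : ∀ t : ℕ, 1 ≤ t → (∀ i, θ t i ∈ C) ∧ (∀ i, θbar t i ∈ C) := by
    intro t ht
    induction t, ht using Nat.le_induction with
    | base => exact ⟨hθ1, hθbar1⟩
    | succ t ht ih =>
      have hθn : ∀ i, θ (t + 1) i ∈ C := by
        intro i
        rw [hupd t ht i]
        exact hC (ih.2 i) (haC t i) (by linarith [(hγ t ht).2]) (hγ t ht).1 (by ring)
      refine ⟨hθn, fun i => ?_⟩
      rw [hcons t ht i]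
      exact hC.sum_mem (fun j _ => hWnonneg i j) (hrow i) (fun j _ => hθn j)
  -- averages of families in C lie in C
  have hmean : ∀ f : Fin N → EuclideanSpace ℝ (Fin d), (∀ i, f i ∈ C) →
      (N : ℝ)⁻¹ • ∑ j, f j ∈ C := by
    intro f hf
    rw [Finset.smul_sum]
    refine hC.sum_mem (fun j _ => by positivity) ?_ (fun j _ => hf j)
    rw [Finset.sum_const, Finset.card_univ, Fintype.card_fin, nsmul_eq_mul]
    field_simp
  -- crude bound: any centered configuration in C has ℓ² norm ≤ √N ρ
  have hcrude : ∀ (f : Fin N → EuclideanSpace ℝ (Fin d)) (c : EuclideanSpace ℝ (Fin d)),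
      (∀ i, f i ∈ C) → c ∈ C →
      Real.sqrt (∑ i, ‖f i - c‖ ^ 2) ≤ R := by
    intro f c hf hc
    refine aux_sqrt_sum_le_of_le hρ0 fun i => ?_
    have := Metric.dist_le_diam_of_mem hCcpt.isBounded (hf i) hc
    rwa [dist_eq_norm, hρ] at this
  -- double stochasticity preserves sums
  have hsums : ∀ t : ℕ, 1 ≤ t → ∑ i, θbar (t + 1) i = ∑ j, θ (t + 1) j := by
    intro t ht
    simp_rw [hcons t ht]
    rw [Finset.sum_comm]
    exact Finset.sum_congr rfl fun j _ => by rw [← Finset.sum_smul, hcol, one_smul]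
  have hsums' : ∀ t : ℕ, 2 ≤ t → ∑ i, θbar t i = ∑ j, θ t j := by
    intro t ht
    obtain ⟨s, rfl⟩ := Nat.exists_eq_add_of_le ht
    have e : 2 + s = (1 + s) + 1 := by omega
    rw [e]
    exact hsums (1 + s) (by omega)
  -- contraction step
  have hcontr : ∀ t : ℕ, 1 ≤ t →
      Real.sqrt (∑ i, ‖θbar (t + 1) i - (N : ℝ)⁻¹ • ∑ j, θ (t + 1) j‖ ^ 2) ≤
        lam * Real.sqrt (∑ j, ‖θ (t + 1) j - (N : ℝ)⁻¹ • ∑ k, θ (t + 1) k‖ ^ 2) := by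
    intro t ht
    set m : EuclideanSpace ℝ (Fin d) := (N : ℝ)⁻¹ • ∑ k, θ (t + 1) k with hm
    have hv0 : ∑ j, (θ (t + 1) j - m) = 0 := by
      rw [Finset.sum_sub_distrib, Finset.sum_const, Finset.card_univ, Fintype.card_fin,
        sub_eq_zero, ← Nat.cast_smul_eq_nsmul ℝ, hm, smul_smul]
      rw [mul_inv_cancel₀ (ne_of_gt hNR), one_smul]
    have key : ∀ i, θbar (t + 1) i - m = ∑ j, W i j • (θ (t + 1) j - m) := by
      intro i
      simp_rw [smul_sub, Finset.sum_sub_distrib, ← Finset.sum_smul, hrow, one_smul,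
        hcons t ht]
    have := hlam (fun j => θ (t + 1) j - m) hv0
    calc Real.sqrt (∑ i, ‖θbar (t + 1) i - m‖ ^ 2)
        = Real.sqrt (∑ i, ‖∑ j, W i j • (θ (t + 1) j - m)‖ ^ 2) := by
          congr 1; exact Finset.sum_congr rfl fun i _ => by rw [key i]
      _ ≤ lam * Real.sqrt (∑ j, ‖θ (t + 1) j - m‖ ^ 2) := this
  -- main induction
  intro t ht
  induction t, ht using Nat.le_induction with
  | base =>
    rw [Nat.cast_one, Real.one_rpow]
    have h1 := hcrude (θbar 1) ((N : ℝ)⁻¹ • ∑ j, θ 1 j) hθbar1 (hmean _ hθ1)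
    calc Real.sqrt (∑ i, ‖θbar 1 i - (N : ℝ)⁻¹ • ∑ j, θ 1 j‖ ^ 2) ≤ R := h1
      _ ≤ q * Real.sqrt N * ρ / 1 := by
          rw [div_one, hRdef]
          nlinarith [Real.sqrt_nonneg (N:ℝ), hρ0]
  | succ t ht ih =>
    have h1t : (1:ℝ) ≤ (t : ℝ) := by exact_mod_cast ht
    have hp1 : (1:ℝ) ≤ (t : ℝ) ^ α := Real.one_le_rpow h1t (le_of_lt hα0)
    have hp0 : (0:ℝ) < (t : ℝ) ^ α := by linarith
    have hr0 : (0:ℝ) < ((t : ℝ) + 1) ^ α := Real.rpow_pos_of_pos (by linarith) _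
    have hcastp1 : ((t + 1 : ℕ) : ℝ) = (t : ℝ) + 1 := by push_cast; ring
    by_cases hcase : t + 1 ≤ t₀
    · -- before t₀: use the crude bound
      have hmemt := hmemC (t + 1) (by omega)
      have h1 := hcrude (θbar (t + 1)) ((N : ℝ)⁻¹ • ∑ j, θ (t + 1) j)
        hmemt.2 (hmean _ hmemt.1)
      have hple : ((t : ℝ) + 1) ^ α ≤ q := by
        rw [hqdef]
        exact Real.rpow_le_rpow (by linarith) (by exact_mod_cast hcase) (le_of_lt hα0)
      refine le_trans h1 ?_
      rw [hcastp1, le_div_iff₀ hr0]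
      calc R * ((t : ℝ) + 1) ^ α ≤ R * q := by nlinarith
        _ ≤ q * Real.sqrt N * ρ := by rw [hRdef]; ring_nf; exact le_refl _
    · -- after t₀: contraction + induction hypothesis
      have ht₀t : t₀ ≤ t := by omega
      have ht₀tR : ((t₀ : ℝ)) ≤ (t : ℝ) := by exact_mod_cast ht₀t
      set γ : ℝ := (t : ℝ) ^ (-α) with hγdef
      have hγeq : γ = ((t : ℝ) ^ α)⁻¹ := by
        rw [hγdef, Real.rpow_neg (by linarith)]
      have hγ0 : 0 ≤ γ := (hγ t ht).1
      have hγ1 : γ ≤ 1 := (hγ t ht).2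
      -- bound on the θbar-centered consensus error at time t
      have hEbar : Real.sqrt (∑ j, ‖θbar t j - (N : ℝ)⁻¹ • ∑ k, θbar t k‖ ^ 2)
          ≤ q * Real.sqrt N * ρ / (t : ℝ) ^ α := by
        rcases eq_or_lt_of_le ht with h1 | h2
        · -- t = 1 : crude bound suffices since q ≥ 1 = t^α
          have hmem1 := hmemC t (by omega)
          have h := hcrude (θbar t) ((N : ℝ)⁻¹ • ∑ k, θbar t k) hmem1.2 (hmean _ hmem1.2)
          refine le_trans h ?_
          rw [le_div_iff₀ hp0, ← h1]
          simp only [Nat.cast_one, Real.one_rpow]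
          rw [hRdef]; nlinarith [Real.sqrt_nonneg (N:ℝ), hρ0]
        · -- t ≥ 2 : the mean of θbar equals the mean of θ, use ih
          have : ∑ k, θbar t k = ∑ k, θ t k := hsums' t h2
          rw [this]
          exact ih
      have habar : Real.sqrt (∑ j, ‖a t j - (N : ℝ)⁻¹ • ∑ k, a t k‖ ^ 2) ≤ R :=
        hcrude (a t) _ (fun j => haC t j) (hmean _ (fun j => haC t j))
      -- decomposition of centered iterates
      have hm : (N : ℝ)⁻¹ • ∑ j, θ (t + 1) j
          = (1 - γ) • ((N : ℝ)⁻¹ • ∑ j, θbar t j) + γ • ((N : ℝ)⁻¹ • ∑ j, a t j) := by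
        have : (∑ j, θ (t + 1) j) = (1 - γ) • ∑ j, θbar t j + γ • ∑ j, a t j := by
          simp_rw [hupd t ht]
          rw [Finset.sum_add_distrib, Finset.smul_sum, Finset.smul_sum]
        rw [this]
        module
      have hdec : ∀ j, θ (t + 1) j - (N : ℝ)⁻¹ • ∑ k, θ (t + 1) k
          = (1 - γ) • (θbar t j - (N : ℝ)⁻¹ • ∑ k, θbar t k)
            + γ • (a t j - (N : ℝ)⁻¹ • ∑ k, a t k) := by
        intro j
        rw [hupd t ht j, hm]
        module
      -- ℓ² bound on the centered θ at time t+1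
      have hS : Real.sqrt (∑ j, ‖θ (t + 1) j - (N : ℝ)⁻¹ • ∑ k, θ (t + 1) k‖ ^ 2)
          ≤ (1 - γ) * (q * Real.sqrt N * ρ / (t : ℝ) ^ α) + γ * R := by
        calc Real.sqrt (∑ j, ‖θ (t + 1) j - (N : ℝ)⁻¹ • ∑ k, θ (t + 1) k‖ ^ 2)
            = Real.sqrt (∑ j, ‖(1 - γ) • (θbar t j - (N : ℝ)⁻¹ • ∑ k, θbar t k)
                + γ • (a t j - (N : ℝ)⁻¹ • ∑ k, a t k)‖ ^ 2) := by
              congr 1; exact Finset.sum_congr rfl fun j _ => by rw [hdec j]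
          _ ≤ Real.sqrt (∑ j, ‖(1 - γ) • (θbar t j - (N : ℝ)⁻¹ • ∑ k, θbar t k)‖ ^ 2)
              + Real.sqrt (∑ j, ‖γ • (a t j - (N : ℝ)⁻¹ • ∑ k, a t k)‖ ^ 2) :=
              aux_sqrt_sum_add_le _ _
          _ = |1 - γ| * Real.sqrt (∑ j, ‖θbar t j - (N : ℝ)⁻¹ • ∑ k, θbar t k‖ ^ 2)
              + |γ| * Real.sqrt (∑ j, ‖a t j - (N : ℝ)⁻¹ • ∑ k, a t k‖ ^ 2) := by
              rw [aux_sqrt_sum_smul, aux_sqrt_sum_smul]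
          _ ≤ (1 - γ) * (q * Real.sqrt N * ρ / (t : ℝ) ^ α) + γ * R := by
              rw [abs_of_nonneg (by linarith : (0:ℝ) ≤ 1 - γ), abs_of_nonneg hγ0]
              have := hEbar
              have h1 := mul_le_mul_of_nonneg_left hEbar (by linarith : (0:ℝ) ≤ 1 - γ)
              have h2 := mul_le_mul_of_nonneg_left habar hγ0
              linarith
      -- put everything together
      have hmain := le_trans (hcontr t ht) (mul_le_mul_of_nonneg_left hS hlam0)
      refine le_trans hmain ?_
      rw [hcastp1]
      -- arithmetic
      have hmono : q / ((t₀ : ℝ) + 1) ^ α ≤ (t : ℝ) ^ α / ((t : ℝ) + 1) ^ α := by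
        rw [hqdef, ← Real.div_rpow (by linarith) (by linarith),
          ← Real.div_rpow (by linarith) (by linarith)]
        refine Real.rpow_le_rpow (by positivity) ?_ (le_of_lt hα0)
        rw [div_le_div_iff₀ (by linarith) (by linarith)]
        nlinarith
      have hlam' : lam ≤ (q / ((t₀ : ℝ) + 1) ^ α) / (1 + q⁻¹) := by
        have e1 : ((t₀ : ℝ) / ((t₀ : ℝ) + 1)) ^ α = q / ((t₀ : ℝ) + 1) ^ α := by
          rw [hqdef, Real.div_rpow (by linarith) (by linarith)]
        have e2 : (t₀ : ℝ) ^ (-α) = q⁻¹ := by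
          rw [hqdef, Real.rpow_neg (by linarith)]
        rw [← e1, ← e2]
        exact hlamle
      have := aux_arith lam R ((t : ℝ) ^ α) q (((t : ℝ) + 1) ^ α) (((t₀ : ℝ) + 1) ^ α)
        hR0 hlam0 hp1 hq1 hr0 (Real.rpow_pos_of_pos (by linarith) _) hmono hlam'
      calc lam * ((1 - γ) * (q * Real.sqrt N * ρ / (t : ℝ) ^ α) + γ * R)
          = lam * ((1 - ((t : ℝ) ^ α)⁻¹) * (q * R / (t : ℝ) ^ α) + ((t : ℝ) ^ α)⁻¹ * R) := by
            rw [hγeq, hRdef]; ring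
        _ ≤ q * R / ((t : ℝ) + 1) ^ α := this
        _ = q * Real.sqrt N * ρ / ((t : ℝ) + 1) ^ α := by rw [hRdef]; ring
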